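/- Under the well-posedness assumptions for the mixed problem, the pressure component p of the solution (u,p) with data (f,g) satisfies ‖p‖_Q ≤ (1/β) inf_{w⁰∈K} ( ‖f − a(w⁰,·)‖_{V'} + (‖a‖/α₀)‖f − a(w⁰,·)‖_{K'} ) + (‖a‖/β²)(1 + ‖a‖/α₀)‖g‖_{Q'}. -/

import Mathlib

open Set

/-- Dual (semi) norm of a functional `f : V → ℝ`, tested only on the subset `U`. -/
noncomputable def dualSemiNorm {V : Type*} [NormedAddCommGroup V] (U : Set V) (f : V → ℝ) : ℝ :=
  sSup ((fun v => |f v| / ‖v‖) '' (U \ {0}))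

lemma dsn_nonneg {V : Type*} [NormedAddCommGroup V] (U : Set V) (f : V → ℝ) :
    0 ≤ dualSemiNorm U f := by
  apply Real.sSup_nonneg
  rintro x ⟨v, -, rfl⟩
  positivity

lemma dsn_le {V : Type*} [NormedAddCommGroup V] {U : Set V} {f : V → ℝ} {M : ℝ}
    (hM : 0 ≤ M) (h : ∀ v ∈ U, v ≠ 0 → |f v| ≤ M * ‖v‖) : dualSemiNorm U f ≤ M := by
  apply Real.sSup_le _ hM
  rintro x ⟨v, ⟨hvU, hv0⟩, rfl⟩
  have hv0' : v ≠ 0 := by simpa using hv0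
  have hvpos : (0:ℝ) < ‖v‖ := norm_pos_iff.mpr hv0'
  rw [div_le_iff₀ hvpos]
  exact h v hvU hv0'

lemma abs_le_dsn {V : Type*} [NormedAddCommGroup V] (U : Set V) (g : V → ℝ) (M : ℝ)
    (hbd : ∀ w ∈ U, |g w| ≤ M * ‖w‖) (hg0 : g 0 = 0) {v : V} (hv : v ∈ U) :
    |g v| ≤ dualSemiNorm U g * ‖v‖ := by
  rcases eq_or_ne v 0 with rfl | hv0
  · have := dsn_nonneg U g
    simp [hg0]
  · have hvpos : (0:ℝ) < ‖v‖ := norm_pos_iff.mpr hv0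
    have hbdd : BddAbove ((fun x => |g x| / ‖x‖) '' (U \ {0})) := by
      refine ⟨max M 0, ?_⟩
      rintro x ⟨w, ⟨hwU, hw0⟩, rfl⟩
      have hw0' : w ≠ 0 := by simpa using hw0
      have hwpos : (0:ℝ) < ‖w‖ := norm_pos_iff.mpr hw0'
      rw [div_le_iff₀ hwpos]
      calc |g w| ≤ M * ‖w‖ := hbd w hwU
        _ ≤ max M 0 * ‖w‖ := by gcongr; exact le_max_left _ _
    have hmem : |g v| / ‖v‖ ∈ (fun x => |g x| / ‖x‖) '' (U \ {0}) :=
      ⟨v, ⟨hv, by simpa using hv0⟩, rfl⟩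
    have h := le_csSup hbdd hmem
    rw [div_le_iff₀ hvpos] at h
    exact h

set_option maxHeartbeats 2000000 in
/-- Refined stability estimate for the pressure component `p` of the mixed problem. -/
theorem stmt2
    {V Q : Type*} [NormedAddCommGroup V] [InnerProductSpace ℝ V] [CompleteSpace V]
    [NormedAddCommGroup Q] [InnerProductSpace ℝ Q] [CompleteSpace Q]
    (a : V →L[ℝ] V →L[ℝ] ℝ) (b : V →L[ℝ] Q →L[ℝ] ℝ)
    (K : Set V) (hK : K = {v : V | ∀ q : Q, b v q = 0})
    (α₀ : ℝ) (hα₀ : 0 < α₀)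
    (hinfsup : ∀ w ∈ K, α₀ * ‖w‖ ≤ dualSemiNorm K (fun v => a w v))
    (hnondeg : ∀ w ∈ K, (∀ v ∈ K, a w v = 0) → w = 0)
    (β : ℝ) (hβ : 0 < β)
    (hBsurj : ∀ h : Q →L[ℝ] ℝ, ∃ v : V, b v = h ∧ ‖v‖ ≤ (1 / β) * ‖h‖)
    (f : V →L[ℝ] ℝ) (g : Q →L[ℝ] ℝ) (u : V) (p : Q)
    (hsol1 : ∀ v : V, a u v + b v p = f v) (hsol2 : ∀ q : Q, b u q = g q) :
    ‖p‖ ≤ (1 / β) * (⨅ w : {w : V // w ∈ K},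
        dualSemiNorm Set.univ (fun v => f v - a w.1 v)
          + (‖a‖ / α₀) * dualSemiNorm K (fun v => f v - a w.1 v))
      + (‖a‖ / β ^ 2) * (1 + ‖a‖ / α₀) * ‖g‖ := by
  classical
  have ha0 : (0:ℝ) ≤ ‖a‖ := norm_nonneg a
  have hg0 : (0:ℝ) ≤ ‖g‖ := norm_nonneg g
  have h0K : (0:V) ∈ K := by rw [hK]; intro q; simp
  haveI : Nonempty {w : V // w ∈ K} := ⟨⟨0, h0K⟩⟩
  obtain ⟨ug, hug1, hug2⟩ := hBsurj g
  have hug0 : (0:ℝ) ≤ ‖ug‖ := norm_nonneg ug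
  have hug2' : β * ‖ug‖ ≤ ‖g‖ := by
    have h1 : β * ‖ug‖ ≤ β * ((1/β) * ‖g‖) := by nlinarith
    have e : β * ((1/β) * ‖g‖) = ‖g‖ := by field_simp
    linarith
  set C := (‖a‖ / β ^ 2) * (1 + ‖a‖ / α₀) * ‖g‖ with hC
  -- key pointwise estimate, in multiplied form
  have key : ∀ w : {w : V // w ∈ K},
      β * ‖p‖ ≤ (dualSemiNorm Set.univ (fun v => f v - a w.1 v)
        + (‖a‖/α₀) * dualSemiNorm K (fun v => f v - a w.1 v)) + β * C := by
    rintro ⟨w₀, hw₀⟩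
    set DV := dualSemiNorm Set.univ (fun v => f v - a w₀ v) with hDVdef
    set DK := dualSemiNorm K (fun v => f v - a w₀ v) with hDKdef
    have hDV : 0 ≤ DV := dsn_nonneg _ _
    have hDK : 0 ≤ DK := dsn_nonneg _ _
    -- pointwise bound for the functional f - a w₀
    have hFbd : ∀ v : V, |f v - a w₀ v| ≤ (‖f‖ + ‖a‖ * ‖w₀‖) * ‖v‖ := by
      intro v
      have h1 : |f v| ≤ ‖f‖ * ‖v‖ := f.le_opNorm v
      have h2 : |a w₀ v| ≤ ‖a‖ * ‖w₀‖ * ‖v‖ := a.le_opNorm₂ w₀ v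
      calc |f v - a w₀ v| ≤ |f v| + |a w₀ v| := abs_sub _ _
        _ ≤ ‖f‖ * ‖v‖ + ‖a‖ * ‖w₀‖ * ‖v‖ := by linarith
        _ = (‖f‖ + ‖a‖ * ‖w₀‖) * ‖v‖ := by ring
    have hF0 : f 0 - a w₀ 0 = 0 := by simp
    -- z := u - ug - w₀ lies in K
    set z := u - ug - w₀ with hzdef
    have hzK : z ∈ K := by
      rw [hK]
      intro q
      have h1 : b u q = g q := hsol2 q
      have h2 : b ug q = g q := by rw [hug1]
      have hw : b w₀ q = 0 := by rw [hK] at hw₀; exact hw₀ q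
      simp [hzdef, map_sub, ContinuousLinearMap.sub_apply, h1, h2, hw]
    -- bound a z on K
    have hstepA : α₀ * ‖z‖ ≤ DK + ‖a‖ * ‖ug‖ := by
      refine le_trans (hinfsup z hzK) (dsn_le (by positivity) ?_)
      intro v hvK hv0
      have hbvp : b v p = 0 := by rw [hK] at hvK; exact hvK p
      have hau : a u v = f v := by have := hsol1 v; linarith [this, hbvp]
      have hz : a z v = (f v - a w₀ v) - a ug v := by
        simp only [hzdef, map_sub, ContinuousLinearMap.sub_apply, hau]
        ring
      have h1 : |f v - a w₀ v| ≤ DK * ‖v‖ :=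
        abs_le_dsn K _ (‖f‖ + ‖a‖ * ‖w₀‖) (fun w hw => hFbd w) hF0 hvK
      have h2 : |a ug v| ≤ ‖a‖ * ‖ug‖ * ‖v‖ := a.le_opNorm₂ ug v
      calc |a z v| = |(f v - a w₀ v) - a ug v| := by rw [hz]
        _ ≤ |f v - a w₀ v| + |a ug v| := abs_sub _ _
        _ ≤ DK * ‖v‖ + ‖a‖ * ‖ug‖ * ‖v‖ := by linarith
        _ = (DK + ‖a‖ * ‖ug‖) * ‖v‖ := by ring
    set N := ‖u - w₀‖ with hNdef
    have hNtri : N ≤ ‖z‖ + ‖ug‖ := by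
      have : u - w₀ = z + ug := by rw [hzdef]; abel
      rw [hNdef, this]
      exact norm_add_le _ _
    have hNα : α₀ * N ≤ DK + (‖a‖ + α₀) * ‖ug‖ := by nlinarith
    -- step B : β ‖p‖ ≤ DV + ‖a‖ N
    have hstepB : β * ‖p‖ ≤ DV + ‖a‖ * N := by
      set h := (InnerProductSpace.toDual ℝ Q) p with hhdef
      obtain ⟨v, hv1, hv2⟩ := hBsurj h
      have hnh : ‖h‖ = ‖p‖ := (InnerProductSpace.toDual ℝ Q).norm_map p
      have hβv : β * ‖v‖ ≤ ‖p‖ := by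
        have h1 : β * ‖v‖ ≤ β * ((1/β) * ‖h‖) := by nlinarith [norm_nonneg v]
        have e : β * ((1/β) * ‖h‖) = ‖h‖ := by field_simp
        rw [← hnh]; linarith
      have hpp : ‖p‖ * ‖p‖ = h p := by
        rw [hhdef, InnerProductSpace.toDual_apply_apply, real_inner_self_eq_norm_mul_norm]
      have hbvp : b v p = f v - a u v := by have := hsol1 v; linarith
      have hsplit : f v - a u v = (f v - a w₀ v) - a (u - w₀) v := by
        simp [map_sub, ContinuousLinearMap.sub_apply]
      have h1 : |f v - a w₀ v| ≤ DV * ‖v‖ :=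
        abs_le_dsn Set.univ _ (‖f‖ + ‖a‖ * ‖w₀‖) (fun w _ => hFbd w) hF0 (mem_univ v)
      have h2 : |a (u - w₀) v| ≤ ‖a‖ * N * ‖v‖ := by
        rw [hNdef]; exact a.le_opNorm₂ (u - w₀) v
      have hsq : ‖p‖ * ‖p‖ ≤ (DV + ‖a‖ * N) * ‖v‖ := by
        rw [hpp, ← hv1, hbvp, hsplit]
        calc (f v - a w₀ v) - a (u - w₀) v ≤ |f v - a w₀ v| + |a (u - w₀) v| := by
              have := abs_sub (f v - a w₀ v) (a (u - w₀) v)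
              have := le_abs_self ((f v - a w₀ v) - a (u - w₀) v)
              linarith
          _ ≤ DV * ‖v‖ + ‖a‖ * N * ‖v‖ := by linarith
          _ = (DV + ‖a‖ * N) * ‖v‖ := by ring
      have hN0 : 0 ≤ N := by rw [hNdef]; positivity
      have hM0 : 0 ≤ DV + ‖a‖ * N := add_nonneg hDV (mul_nonneg ha0 hN0)
      rcases eq_or_lt_of_le (norm_nonneg p) with h0 | h0
      · rw [← h0, mul_zero]; exact hM0
      · have hβsq : β * (‖p‖ * ‖p‖) ≤ (DV + ‖a‖ * N) * (β * ‖v‖) := by nlinarith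
        have h' : (β * ‖p‖) * ‖p‖ ≤ (DV + ‖a‖ * N) * ‖p‖ := by
          nlinarith [mul_le_mul_of_nonneg_left hβv hM0]
        exact le_of_mul_le_mul_right h' h0
    -- combine
    have hCmul : β * C = (‖a‖ / β) * (1 + ‖a‖ / α₀) * ‖g‖ := by
      rw [hC]; field_simp
    have hα₀' : (0:ℝ) < α₀ := hα₀
    have hgoal : β * ‖p‖ ≤ (DV + (‖a‖/α₀) * DK) + β * C := by
      rw [hCmul]
      have e1 : α₀ * (β * ‖p‖) ≤ α₀ * (DV + ‖a‖ * N) :=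
        mul_le_mul_of_nonneg_left hstepB hα₀.le
      have e2 : ‖a‖ * (α₀ * N) ≤ ‖a‖ * (DK + (‖a‖ + α₀) * ‖ug‖) :=
        mul_le_mul_of_nonneg_left hNα ha0
      have e3 : (‖a‖ * (‖a‖ + α₀) / β) * (β * ‖ug‖) ≤ (‖a‖ * (‖a‖ + α₀) / β) * ‖g‖ :=
        mul_le_mul_of_nonneg_left hug2' (by positivity)
      have efld : α₀ * ((DV + (‖a‖/α₀) * DK) + (‖a‖ / β) * (1 + ‖a‖ / α₀) * ‖g‖)
          = α₀ * DV + ‖a‖ * DK + (‖a‖ * (‖a‖ + α₀) / β) * ‖g‖ := by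
        field_simp
        ring
      have efld2 : (‖a‖ * (‖a‖ + α₀) / β) * (β * ‖ug‖) = ‖a‖ * (‖a‖ + α₀) * ‖ug‖ := by
        field_simp
      have e3' : ‖a‖ * (‖a‖ + α₀) * ‖ug‖ ≤ (‖a‖ * (‖a‖ + α₀) / β) * ‖g‖ := by
        rw [← efld2]; exact e3
      rw [← mul_le_mul_iff_right₀ hα₀]
      rw [efld]
      linarith [e1, e2, e3']
    exact hgoal
  -- take infimum
  have hinf : β * ‖p‖ - β * C ≤ ⨅ w : {w : V // w ∈ K},
      dualSemiNorm Set.univ (fun v => f v - a w.1 v)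
        + (‖a‖/α₀) * dualSemiNorm K (fun v => f v - a w.1 v) :=
    le_ciInf (fun w => by have := key w; linarith)
  revert hinf
  generalize (⨅ w : {w : V // w ∈ K},
      dualSemiNorm Set.univ (fun v => f v - a w.1 v)
        + (‖a‖/α₀) * dualSemiNorm K (fun v => f v - a w.1 v)) = I
  intro hinf
  have hdiv : ‖p‖ ≤ (I + β * C) / β := by
    rw [le_div_iff₀ hβ]; linarith
  have heq : (I + β * C) / β = (1/β) * I + C := by
    field_simp
  linarith [hdiv, heq.le, heq.ge]
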